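/- Let A be a C*-algebra, a ∈ A positive with ‖a‖ = 1, and x ∈ A. If there exists k > 0 such that [[ka, x], [x*, ka]] is positive in M₂(A), then x*x ≤ k²·a. -/

import Mathlib

variable {A : Type*} [NonUnitalCStarAlgebra A]

/-- Positivity in the C*-algebra `M₂(A)`: an element of a C*-algebra is positive
iff it is of the form `star y * y`. -/
def M2Pos (m : Matrix (Fin 2) (Fin 2) A) : Prop := ∃ y, m = star y * y
variable [PartialOrder A] [StarOrderedRing A]

theorem stmt_7 (a x : A) (ha : 0 ≤ a) (han : ‖a‖ = 1) (k : ℝ) (hk : 0 < k)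
    (h : M2Pos !![k • a, x; star x, k • a]) :
    star x * x ≤ (k ^ 2) • a := by
  obtain ⟨y, hy⟩ := h
  set u0 := y 0 0; set u1 := y 1 0; set v0 := y 0 1; set v1 := y 1 1
  have e00 : k • a = star u0 * u0 + star u1 * u1 := by
    have := congrFun (congrFun hy 0) 0
    simpa [Matrix.mul_apply, Fin.sum_univ_two, Matrix.star_apply] using this
  have e01 : x = star u0 * v0 + star u1 * v1 := by
    have := congrFun (congrFun hy 0) 1
    simpa [Matrix.mul_apply, Fin.sum_univ_two, Matrix.star_apply] using this
  have e11 : k • a = star v0 * v0 + star v1 * v1 := by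
    have := congrFun (congrFun hy 1) 1
    simpa [Matrix.mul_apply, Fin.sum_univ_two, Matrix.star_apply] using this
  set c : A := k⁻¹ • x with hc
  have hpos : 0 ≤ star (u0*c - v0)*(u0*c-v0) + star (u1*c - v1)*(u1*c-v1) :=
    add_nonneg (star_mul_self_nonneg _) (star_mul_self_nonneg _)
  have hexp : star (u0*c - v0)*(u0*c-v0) + star (u1*c - v1)*(u1*c-v1)
      = star c * (k • a) * c - star c * x - star x * c + k • a := by
    have key : star (u0*c - v0)*(u0*c-v0) + star (u1*c - v1)*(u1*c-v1)
        = star c * (star u0*u0 + star u1*u1) * c - star c * (star u0*v0 + star u1*v1)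
          - star (star u0*v0 + star u1*v1) * c + (star v0*v0 + star v1*v1) := by
      simp only [star_sub, star_mul, star_add, star_star]
      noncomm_ring
    rw [key, ← e00, ← e01, ← e11]
  rw [hexp] at hpos
  -- bound the conjugate term
  have hsa : IsSelfAdjoint (k • a) := IsSelfAdjoint.smul (star_trivial k) (.of_nonneg ha)
  have hconj : star x * (k • a) * x ≤ ‖k • a‖ • (star x * x) :=
    CStarAlgebra.star_left_conjugate_le_norm_smul hsa
  have hnorm : ‖k • a‖ = k := by
    rw [norm_smul, han, Real.norm_eq_abs, abs_of_pos hk, mul_one]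
  have hcc : star c * (k • a) * c = (k⁻¹ * k⁻¹) • (star x * (k • a) * x) := by
    rw [hc]
    simp [star_smul, smul_mul_assoc, mul_smul_comm, smul_smul]
    ring_nf
  have hcx : star c * x = k⁻¹ • (star x * x) := by
    rw [hc]; simp [star_smul, smul_mul_assoc]
  have hxc : star x * c = k⁻¹ • (star x * x) := by
    rw [hc]; simp [mul_smul_comm]
  have hbound : star c * (k • a) * c ≤ k⁻¹ • (star x * x) := by
    rw [hcc]
    calc (k⁻¹ * k⁻¹) • (star x * (k • a) * x)
        ≤ (k⁻¹ * k⁻¹) • (‖k • a‖ • (star x * x)) :=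
          smul_le_smul_of_nonneg_left hconj (by positivity)
      _ = k⁻¹ • (star x * x) := by
          rw [hnorm, smul_smul]
          congr 1
          field_simp
  -- combine
  have h2 : 0 ≤ k⁻¹ • (star x * x) - k⁻¹ • (star x * x) - k⁻¹ • (star x * x) + k • a := by
    calc (0:A) ≤ star c * (k • a) * c - star c * x - star x * c + k • a := hpos
      _ ≤ k⁻¹ • (star x * x) - k⁻¹ • (star x * x) - k⁻¹ • (star x * x) + k • a := by
          rw [hcx, hxc]
          gcongr
  have h3 : k⁻¹ • (star x * x) ≤ k • a := by
    have : k⁻¹ • (star x * x) - k⁻¹ • (star x * x) - k⁻¹ • (star x * x) + k • a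
        = k • a - k⁻¹ • (star x * x) := by abel
    rw [this] at h2
    exact sub_nonneg.mp h2
  have := smul_le_smul_of_nonneg_left h3 (le_of_lt hk)
  rw [smul_smul, smul_smul, mul_inv_cancel₀ hk.ne', one_smul] at this
  calc star x * x ≤ (k * k) • a := this
    _ = (k ^ 2) • a := by rw [sq]
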